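/- Let M ∈ ℕ* with M ≥ ‖T°x*‖ for all x* ∈ X₀ and B ∈ ℕ* with B ≥ μ₀. Set κ(k) := 4(M+1)(B(4k+4)−1)² − 1. If x ∈ Γ_{κ(k)}, then ‖x − J_{μ₀}^S(x + μ₀ T°x)‖ ≤ 1/(k+1). -/
import Mathlib
set_option maxHeartbeats 800000


open scoped RealInnerProductSpace

/-- The approximation sets `Γ_m` for Moudafi's algorithm. -/
def Gamma {X : Type*} [NormedAddCommGroup X] [NormedSpace ℝ X]
    (X0 : Set X) (T : X → Set X) (Tc : X → X) (JS : ℝ → X → X) (μ : ℕ → ℝ) (m : ℕ) :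
    Set X :=
  {xs ∈ X0 | ∃ ys : X,
    |‖ys‖ - ‖Tc xs‖| ≤ 1 / ((m : ℝ) + 1) ∧
    (∃ w ∈ T xs, ‖ys - w‖ ≤ 1 / ((m : ℝ) + 1)) ∧
    ∀ i ≤ m, ‖xs - JS (μ i) (xs + μ i • ys)‖ ≤ 1 / ((m : ℝ) + 1)}

/-- with `κ(k) := 4(M+1)(B(4k+4)−1)² − 1`, if `x ∈ Γ_{κ(k)}` then
`‖x − J^S_{μ₀}(x + μ₀ T°x)‖ ≤ 1/(k+1)`. -/
theorem stmt10 {X : Type*} [NormedAddCommGroup X] [InnerProductSpace ℝ X]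
    (T S : X → Set X) (Tc : X → X) (JS : ℝ → X → X)
    (μ : ℕ → ℝ) (hμ : ∀ i, 0 < μ i)
    (X0 : Set X)
    (M B : ℕ) (hM1 : 1 ≤ M) (hB1 : 1 ≤ B)
    (hM : ∀ u ∈ X0, ‖Tc u‖ ≤ (M : ℝ)) (hB : μ 0 ≤ (B : ℝ))
    (hsel : ∀ u ∈ X0, Tc u ∈ T u)
    (hproj : ∀ u ∈ X0, ∀ y ∈ T u, ⟪y - Tc u, -Tc u⟫ ≤ 0)
    (hJS_ne : ∀ m : ℝ, 0 < m → ∀ u v : X, ‖JS m u - JS m v‖ ≤ ‖u - v‖)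
    (k : ℕ) (x : X)
    (hx : x ∈ Gamma X0 T Tc JS μ (4 * (M + 1) * (B * (4 * k + 4) - 1) ^ 2 - 1)) :
    ‖x - JS (μ 0) (x + μ 0 • Tc x)‖ ≤ 1 / ((k : ℝ) + 1) := by
  obtain ⟨hx0, y, hy1, ⟨w, hwT, hyw⟩, hy3⟩ := hx
  set m : ℕ := 4 * (M + 1) * (B * (4 * k + 4) - 1) ^ 2 - 1 with hm
  -- natural number facts
  have hBk : 1 ≤ B * (4 * k + 4) := Nat.one_le_iff_ne_zero.2 (by positivity)
  have hBk4 : 4 ≤ B * (4 * k + 4) :=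
    le_trans (by omega : 4 ≤ 1 * (4 * k + 4)) (Nat.mul_le_mul_right _ hB1)
  have hD3 : 3 ≤ B * (4 * k + 4) - 1 := by omega
  have hN1 : 1 ≤ 4 * (M + 1) * (B * (4 * k + 4) - 1) ^ 2 := by nlinarith
  -- real quantities
  set d : ℝ := (B : ℝ) * (4 * (k : ℝ) + 4) - 1 with hd
  have hd3 : (3 : ℝ) ≤ d := by
    have h : ((3 : ℕ) : ℝ) ≤ ((B * (4 * k + 4) - 1 : ℕ) : ℝ) := Nat.cast_le.2 hD3
    rw [Nat.cast_sub hBk] at h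
    push_cast at h
    rw [hd]; linarith
  have e2 : ((m : ℝ)) + 1 = 4 * ((M : ℝ) + 1) * d ^ 2 := by
    rw [hm, Nat.cast_sub hN1]
    push_cast [Nat.cast_sub hBk]
    ring
  have hdpos : (0 : ℝ) < d := by linarith
  have hMpos : (0 : ℝ) < (M : ℝ) + 1 := by positivity
  have hNpos : (0 : ℝ) < 4 * ((M : ℝ) + 1) * d ^ 2 := by positivity
  set ε : ℝ := 1 / ((m : ℝ) + 1) with hε
  have hεeq : ε = 1 / (4 * ((M : ℝ) + 1) * d ^ 2) := by rw [hε, e2]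
  have hεpos : 0 < ε := by rw [hεeq]; positivity
  have hε1 : ε ≤ 1 := by
    rw [hεeq]
    rw [div_le_one hNpos]
    nlinarith
  -- bound ‖w - Tc x‖
  have hM' : ‖Tc x‖ ≤ (M : ℝ) := hM x hx0
  have hTcw : ⟪w - Tc x, -Tc x⟫ ≤ 0 := hproj x hx0 w hwT
  have hexp : ‖w - Tc x‖ ^ 2 = ‖w‖ ^ 2 - ‖Tc x‖ ^ 2 + 2 * ⟪w - Tc x, -Tc x⟫ := by
    have h1 : ⟪w - Tc x, -Tc x⟫ = -⟪w, Tc x⟫ + ‖Tc x‖ ^ 2 := by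
      rw [inner_sub_left, inner_neg_right, inner_neg_right,
        real_inner_self_eq_norm_sq]
      ring
    rw [h1, @norm_sub_sq_real X]
    ring
  have hw_norm : ‖w‖ ≤ ‖Tc x‖ + 2 * ε := by
    have h1 := abs_norm_sub_norm_le y w
    have h2 := (abs_le.1 hy1).2
    have h3 := (abs_le.1 (h1.trans hyw)).1
    linarith
  have hsq : ‖w - Tc x‖ ^ 2 ≤ 4 * ε * ((M : ℝ) + 1) := by
    nlinarith [mul_self_le_mul_self (norm_nonneg w) hw_norm,
      mul_nonneg hεpos.le (sub_nonneg.2 hM'),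
      mul_le_mul_of_nonneg_left hε1 hεpos.le, norm_nonneg (Tc x)]
  have hεval : 4 * ε * ((M : ℝ) + 1) = (1 / d) ^ 2 := by
    rw [hεeq]; field_simp
  have hwd : ‖w - Tc x‖ ≤ 1 / d := by
    rw [hεval] at hsq
    have h := Real.sqrt_le_sqrt hsq
    rwa [Real.sqrt_sq (norm_nonneg _), Real.sqrt_sq (by positivity)] at h
  have hyTc : ‖y - Tc x‖ ≤ ε + 1 / d := by
    calc ‖y - Tc x‖ = ‖(y - w) + (w - Tc x)‖ := by rw [sub_add_sub_cancel]
      _ ≤ ‖y - w‖ + ‖w - Tc x‖ := norm_add_le _ _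
      _ ≤ ε + 1 / d := add_le_add hyw hwd
  -- main chain
  have h0 := hy3 0 (Nat.zero_le m)
  have hnonexp := hJS_ne (μ 0) (hμ 0) (x + μ 0 • y) (x + μ 0 • Tc x)
  have hdiff : ‖(x + μ 0 • y) - (x + μ 0 • Tc x)‖ = μ 0 * ‖y - Tc x‖ := by
    rw [add_sub_add_left_eq_sub, ← smul_sub, norm_smul, Real.norm_eq_abs,
      abs_of_pos (hμ 0)]
  have hμB : μ 0 * ‖y - Tc x‖ ≤ (B : ℝ) * (ε + 1 / d) := by
    have := mul_le_mul hB hyTc (norm_nonneg _) (by positivity)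
    linarith
  have htri : ‖x - JS (μ 0) (x + μ 0 • Tc x)‖ ≤
      ‖x - JS (μ 0) (x + μ 0 • y)‖ +
      ‖JS (μ 0) (x + μ 0 • y) - JS (μ 0) (x + μ 0 • Tc x)‖ := by
    have := norm_add_le (x - JS (μ 0) (x + μ 0 • y))
      (JS (μ 0) (x + μ 0 • y) - JS (μ 0) (x + μ 0 • Tc x))
    simpa using this
  have hmain : ‖x - JS (μ 0) (x + μ 0 • Tc x)‖ ≤ ε + (B : ℝ) * (ε + 1 / d) := by
    have h2 : ‖JS (μ 0) (x + μ 0 • y) - JS (μ 0) (x + μ 0 • Tc x)‖ ≤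
        (B : ℝ) * (ε + 1 / d) := by
      calc ‖JS (μ 0) (x + μ 0 • y) - JS (μ 0) (x + μ 0 • Tc x)‖
          ≤ ‖(x + μ 0 • y) - (x + μ 0 • Tc x)‖ := hnonexp
        _ = μ 0 * ‖y - Tc x‖ := hdiff
        _ ≤ (B : ℝ) * (ε + 1 / d) := hμB
    linarith
  -- final arithmetic
  set c : ℝ := (k : ℝ) + 1 with hc
  have hc1 : (1 : ℝ) ≤ c := by
    have : (0:ℝ) ≤ (k:ℝ) := Nat.cast_nonneg k
    rw [hc]; linarith
  have hcpos : (0 : ℝ) < c := by linarith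
  have hdc : d = 4 * (B : ℝ) * c - 1 := by rw [hd, hc]; ring
  have hB1' : (1 : ℝ) ≤ (B : ℝ) := by exact_mod_cast hB1
  have hM1' : (1 : ℝ) ≤ (M : ℝ) := by exact_mod_cast hM1
  have hfin : ε + (B : ℝ) * (ε + 1 / d) ≤ 1 / c := by
    have hsum : ε + (B : ℝ) * (ε + 1 / d) =
        ((1 + (B : ℝ)) + 4 * ((M : ℝ) + 1) * (B : ℝ) * d) /
          (4 * ((M : ℝ) + 1) * d ^ 2) := by
      rw [hεeq]; field_simp; ring
    rw [hsum, div_le_div_iff₀ hNpos hcpos]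
    nlinarith [mul_pos hcpos hdpos, mul_pos (mul_pos hcpos hdpos) hMpos,
      mul_le_mul hB1' hc1 zero_le_one (by linarith : (0:ℝ) ≤ (B:ℝ))]
  linarith
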